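/- Let Γ be a real symmetric positive definite 4×4 covariance matrix of a two-mode state with two smallest eigenvalues λ_1 ≤ λ_2 satisfying λ_1 λ_2 < 1. Then the maximal logarithmic negativity attainable by passive transformations equals −log_2(λ_1 λ_2)/2; i.e., the smallest symplectic eigenvalue of the partially transposed covariance matrix, minimized over passive transformations K applied as Γ ↦ K^T Γ K, equals √(λ_1 λ_2). -/

import Mathlib

open Matrix

open scoped ComplexOrder in
/-- The positive semidefinite square root of a positive semidefinite matrix, as defined in
Mathlib (December 2024); removed from Mathlib since. -/
noncomputable def Matrix.PosSemidef.sqrt {n 𝕜 : Type*} [Fintype n] [RCLike 𝕜] [DecidableEq n]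
    {A : Matrix n n 𝕜} (hA : A.PosSemidef) : Matrix n n 𝕜 :=
  hA.1.eigenvectorUnitary.1 * diagonal ((↑) ∘ Real.sqrt ∘ hA.1.eigenvalues) *
  (star hA.1.eigenvectorUnitary : Matrix n n 𝕜)

lemma Matrix.PosSemidef.posSemidef_sqrt {n : Type*} [Fintype n] [DecidableEq n]
    {A : Matrix n n ℝ} (hA : A.PosSemidef) :
    hA.sqrtᵀ = hA.sqrt ∧ ∀ x : n → ℝ, 0 ≤ x ⬝ᵥ hA.sqrt *ᵥ x := by
  have h : hA.sqrt.PosSemidef := by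
    have hd : (diagonal ((↑) ∘ Real.sqrt ∘ hA.1.eigenvalues) : Matrix n n ℝ).PosSemidef :=
      posSemidef_diagonal_iff.mpr fun i => by simp [Real.sqrt_nonneg]
    have := hd.mul_mul_conjTranspose_same (hA.1.eigenvectorUnitary : Matrix n n ℝ)
    rw [← star_eq_conjTranspose] at this
    exact this
  refine ⟨?_, fun x => by simpa using h.dotProduct_mulVec_nonneg x⟩
  have h1 := h.1.eq
  rwa [conjTranspose_eq_transpose_of_trivial] at h1

lemma Matrix.PosSemidef.sqrt_mul_self {n : Type*} [Fintype n] [DecidableEq n]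
    {A : Matrix n n ℝ} (hA : A.PosSemidef) : hA.sqrt * hA.sqrt = A := by
  have hU : (star hA.1.eigenvectorUnitary : Matrix n n ℝ) * hA.1.eigenvectorUnitary.1 = 1 :=
    Unitary.coe_star_mul_self _
  have hD : (diagonal (RCLike.ofReal ∘ Real.sqrt ∘ hA.1.eigenvalues) : Matrix n n ℝ) *
      diagonal (RCLike.ofReal ∘ Real.sqrt ∘ hA.1.eigenvalues) = diagonal (RCLike.ofReal ∘ hA.1.eigenvalues) := by
    rw [diagonal_mul_diagonal]; congr 1; funext i
    simp [Real.mul_self_sqrt (hA.eigenvalues_nonneg i)]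
  conv_rhs => rw [hA.1.spectral_theorem]
  unfold Matrix.PosSemidef.sqrt
  simp only [Matrix.mul_assoc]
  rw [← Matrix.mul_assoc _ _ (diagonal _ * _), hU, Matrix.one_mul, ← Matrix.mul_assoc (diagonal _), hD]
  simp [Unitary.conjStarAlgAut_apply, Matrix.mul_assoc]

set_option linter.unusedSectionVars false
set_option linter.unusedVariables false
set_option maxHeartbeats 1600000

namespace TwoModeAux


variable {n : Type*} [Fintype n] [DecidableEq n]

lemma dmv (A : Matrix n n ℝ) (x y : n → ℝ) : x ⬝ᵥ A *ᵥ y = (Aᵀ *ᵥ x) ⬝ᵥ y := by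
  rw [dotProduct_mulVec, mulVec_transpose]

lemma dot_sym (A : Matrix n n ℝ) (hA : Aᵀ = A) (x y : n → ℝ) :
    x ⬝ᵥ A *ᵥ y = y ⬝ᵥ A *ᵥ x := by
  rw [dmv, hA, dotProduct_comm]

lemma dot_self_nonneg (x : n → ℝ) : 0 ≤ x ⬝ᵥ x :=
  Finset.sum_nonneg fun i _ => mul_self_nonneg _

lemma cs (x y : n → ℝ) : (x ⬝ᵥ y) ^ 2 ≤ (x ⬝ᵥ x) * (y ⬝ᵥ y) := by
  simpa [dotProduct, sq] using Finset.sum_mul_sq_le_sq_mul_sq Finset.univ x y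

lemma rayleigh_hom (Γ : Matrix n n ℝ) (lam : ℝ)
    (h : ∀ x : n → ℝ, x ⬝ᵥ x = 1 → lam ≤ x ⬝ᵥ Γ *ᵥ x) (w : n → ℝ) :
    lam * (w ⬝ᵥ w) ≤ w ⬝ᵥ Γ *ᵥ w := by
  by_cases hw : w = 0
  · simp [hw]
  · have ht : 0 < w ⬝ᵥ w :=
      lt_of_le_of_ne (dot_self_nonneg w) (fun h0 => hw (dotProduct_self_eq_zero.mp h0.symm))
    set t := w ⬝ᵥ w with htdef
    have hst : Real.sqrt t > 0 := Real.sqrt_pos.mpr ht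
    have hx : ((Real.sqrt t)⁻¹ • w) ⬝ᵥ ((Real.sqrt t)⁻¹ • w) = 1 := by
      rw [smul_dotProduct, dotProduct_smul, smul_eq_mul, smul_eq_mul, ← htdef]
      rw [← mul_assoc]
      rw [← mul_inv]
      rw [Real.mul_self_sqrt ht.le]
      field_simp
    have := h _ hx
    rw [smul_dotProduct, mulVec_smul, dotProduct_smul, smul_eq_mul, smul_eq_mul, ← mul_assoc,
      ← mul_inv, Real.mul_self_sqrt ht.le] at this
    have h2 : lam * t ≤ (t⁻¹ * (w ⬝ᵥ Γ *ᵥ w)) * t := by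
      exact mul_le_mul_of_nonneg_right this ht.le
    calc lam * t ≤ (t⁻¹ * (w ⬝ᵥ Γ *ᵥ w)) * t := h2
      _ = w ⬝ᵥ Γ *ᵥ w := by field_simp

lemma rayleigh_hom2 (Γ : Matrix n n ℝ) (lam : ℝ) (v1 : n → ℝ)
    (h : ∀ x : n → ℝ, x ⬝ᵥ x = 1 → x ⬝ᵥ v1 = 0 → lam ≤ x ⬝ᵥ Γ *ᵥ x) (w : n → ℝ)
    (hw1 : w ⬝ᵥ v1 = 0) :
    lam * (w ⬝ᵥ w) ≤ w ⬝ᵥ Γ *ᵥ w := by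
  by_cases hw : w = 0
  · simp [hw]
  · have ht : 0 < w ⬝ᵥ w :=
      lt_of_le_of_ne (dot_self_nonneg w) (fun h0 => hw (dotProduct_self_eq_zero.mp h0.symm))
    set t := w ⬝ᵥ w with htdef
    have hx : ((Real.sqrt t)⁻¹ • w) ⬝ᵥ ((Real.sqrt t)⁻¹ • w) = 1 := by
      rw [smul_dotProduct, dotProduct_smul, smul_eq_mul, smul_eq_mul, ← htdef, ← mul_assoc,
        ← mul_inv, Real.mul_self_sqrt ht.le]
      field_simp
    have hx1 : ((Real.sqrt t)⁻¹ • w) ⬝ᵥ v1 = 0 := by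
      rw [smul_dotProduct, hw1, smul_eq_mul, mul_zero]
    have := h _ hx hx1
    rw [smul_dotProduct, mulVec_smul, dotProduct_smul, smul_eq_mul, smul_eq_mul, ← mul_assoc,
      ← mul_inv, Real.mul_self_sqrt ht.le] at this
    have h2 : lam * t ≤ (t⁻¹ * (w ⬝ᵥ Γ *ᵥ w)) * t := mul_le_mul_of_nonneg_right this ht.le
    calc lam * t ≤ (t⁻¹ * (w ⬝ᵥ Γ *ᵥ w)) * t := h2
      _ = w ⬝ᵥ Γ *ᵥ w := by field_simp


lemma core (Γ R S : Matrix n n ℝ) (hΓt : Γᵀ = Γ)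
    (hRt : Rᵀ = R) (hRR : R * R = Γ)
    (hdet : IsUnit Γ.det)
    (lam1 lam2 : ℝ) (hl1 : 0 < lam1) (hl2 : 0 < lam2) (hl12 : lam1 ≤ lam2)
    (v1 : n → ℝ) (hv1 : v1 ⬝ᵥ v1 = 1) (hev1 : Γ *ᵥ v1 = lam1 • v1)
    (hm1 : ∀ x : n → ℝ, lam1 * (x ⬝ᵥ x) ≤ x ⬝ᵥ Γ *ᵥ x)
    (hm2 : ∀ x : n → ℝ, x ⬝ᵥ v1 = 0 → lam2 * (x ⬝ᵥ x) ≤ x ⬝ᵥ Γ *ᵥ x)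
    (hSt : Sᵀ = -S) (hSo : Sᵀ * S = 1)
    (ξ : n → ℝ) (hξ : ξ ⬝ᵥ ξ = 1) :
    lam1 * lam2 ≤ ξ ⬝ᵥ (R * (Sᵀ * Γ * S) * R) *ᵥ ξ := by
  set Γi := Γ⁻¹ with hΓidef
  have hGi1 : Γ * Γi = 1 := mul_nonsing_inv _ hdet
  have hGi2 : Γi * Γ = 1 := nonsing_inv_mul _ hdet
  have hGit : Γiᵀ = Γi := by rw [hΓidef, transpose_nonsing_inv, hΓt]
  have hRΓ : R * Γ = Γ * R := by rw [← hRR, Matrix.mul_assoc]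
  have hRΓi : R * Γi = Γi * R := by
    calc R * Γi = (Γi * Γ) * (R * Γi) := by rw [hGi2, Matrix.one_mul]
      _ = Γi * ((Γ * R) * Γi) := by simp only [Matrix.mul_assoc]
      _ = Γi * ((R * Γ) * Γi) := by rw [hRΓ]
      _ = (Γi * R) * (Γ * Γi) := by simp only [Matrix.mul_assoc]
      _ = Γi * R := by rw [hGi1, Matrix.mul_one]
  set p := R *ᵥ ξ with hpdef
  set w := S *ᵥ p with hwdef
  -- value identity
  have hval : ξ ⬝ᵥ (R * (Sᵀ * Γ * S) * R) *ᵥ ξ = w ⬝ᵥ Γ *ᵥ w := by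
    rw [← mulVec_mulVec, ← mulVec_mulVec, ← mulVec_mulVec, ← mulVec_mulVec]
    rw [dmv R ξ _, hRt, ← hpdef]
    rw [dmv (Sᵀ) p _, transpose_transpose, ← hwdef]
  rw [hval]
  -- basic dot facts
  have hww : w ⬝ᵥ w = p ⬝ᵥ p := by
    rw [hwdef, dmv S _ p, mulVec_mulVec, hSo, one_mulVec]
  have hwp : w ⬝ᵥ p = 0 := by
    have h1 : w ⬝ᵥ p = p ⬝ᵥ w := dotProduct_comm _ _
    have h2 : p ⬝ᵥ w = (Sᵀ *ᵥ p) ⬝ᵥ p := by rw [hwdef, dmv S p p]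
    have h3 : (Sᵀ *ᵥ p) ⬝ᵥ p = -(w ⬝ᵥ p) := by
      rw [hSt, neg_mulVec, neg_dotProduct, hwdef]
    linarith [h1.trans (h2.trans h3)]
  have hpΓi : p ⬝ᵥ Γi *ᵥ p = 1 := by
    have h1 : p ⬝ᵥ Γi *ᵥ p = ξ ⬝ᵥ (R * (Γi * R)) *ᵥ ξ := by
      rw [← mulVec_mulVec, ← mulVec_mulVec, hpdef, dmv R ξ _, hRt]
    rw [h1, ← Matrix.mul_assoc, hRΓi, Matrix.mul_assoc, hRR, hGi2, one_mulVec, hξ]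
  have hnp : 0 < p ⬝ᵥ p := by
    rcases eq_or_ne p 0 with h | h
    · rw [h] at hpΓi; simp at hpΓi
    · exact lt_of_le_of_ne (dot_self_nonneg p) fun h0 => h (dotProduct_self_eq_zero.mp h0.symm)
  set a := p ⬝ᵥ v1 with hadef
  set b := w ⬝ᵥ v1 with hbdef
  set np := p ⬝ᵥ p with hnpdef
  -- D1 : lam1 * b^2 + lam2 * (np - b^2) ≤ w ⬝ᵥ Γ *ᵥ w
  have hv1Γ : ∀ x : n → ℝ, x ⬝ᵥ Γ *ᵥ v1 = lam1 * (x ⬝ᵥ v1) := by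
    intro x; rw [hev1, dotProduct_smul, smul_eq_mul]
  have D1 : lam1 * b ^ 2 + lam2 * (np - b ^ 2) ≤ w ⬝ᵥ Γ *ᵥ w := by
    set w' := w - b • v1 with hw'def
    have hw'1 : w' ⬝ᵥ v1 = 0 := by
      rw [hw'def, sub_dotProduct, smul_dotProduct, hv1, smul_eq_mul, mul_one, sub_self]
    have h2 := hm2 w' hw'1
    have e1 : w' ⬝ᵥ Γ *ᵥ w' = w ⬝ᵥ Γ *ᵥ w - lam1 * b ^ 2 := by
      have hsym : v1 ⬝ᵥ Γ *ᵥ w = w ⬝ᵥ Γ *ᵥ v1 := dot_sym Γ hΓt v1 w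
      rw [hw'def]
      rw [sub_dotProduct, mulVec_sub, dotProduct_sub, dotProduct_sub, mulVec_smul,
        dotProduct_smul, smul_dotProduct, smul_dotProduct, smul_eq_mul, smul_eq_mul, smul_eq_mul]
      rw [dotProduct_smul, smul_eq_mul]
      rw [hsym, hv1Γ w, hv1Γ v1, hv1]
      ring
    have e2 : w' ⬝ᵥ w' = np - b ^ 2 := by
      simp only [hw'def, sub_dotProduct, dotProduct_sub, smul_dotProduct, dotProduct_smul,
        smul_eq_mul, hv1]
      rw [dotProduct_comm v1 w, hww]
      ring
    rw [e1, e2] at h2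
    linarith
  -- D2 : lam1 * lam2 ≤ lam2 * a^2 + lam1 * (np - a^2)
  have hΓiv1 : Γi *ᵥ v1 = lam1⁻¹ • v1 := by
    have h1 : Γi *ᵥ (Γ *ᵥ v1) = v1 := by rw [mulVec_mulVec, hGi2, one_mulVec]
    rw [hev1, mulVec_smul] at h1
    have h2 := congrArg (fun z => lam1⁻¹ • z) h1
    simpa [smul_smul, inv_mul_cancel₀ hl1.ne'] using h2
  have hv1Γi : ∀ x : n → ℝ, x ⬝ᵥ Γi *ᵥ v1 = lam1⁻¹ * (x ⬝ᵥ v1) := by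
    intro x; rw [hΓiv1, dotProduct_smul, smul_eq_mul]
  have D2 : lam1 * lam2 ≤ lam2 * a ^ 2 + lam1 * (np - a ^ 2) := by
    set p' := p - a • v1 with hp'def
    have hp'1 : p' ⬝ᵥ v1 = 0 := by
      rw [hp'def, sub_dotProduct, smul_dotProduct, hv1, smul_eq_mul, mul_one, sub_self]
    set y := Γi *ᵥ p' with hydef
    have hyv1 : y ⬝ᵥ v1 = 0 := by
      have : y ⬝ᵥ v1 = v1 ⬝ᵥ Γi *ᵥ p' := by rw [hydef, dotProduct_comm]
      rw [this, dot_sym Γi hGit v1 p', hv1Γi p', hp'1, mul_zero]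
    have hΓy : Γ *ᵥ y = p' := by rw [hydef, mulVec_mulVec, hGi1, one_mulVec]
    set t := p' ⬝ᵥ y with htdef
    have hyΓy : y ⬝ᵥ Γ *ᵥ y = t := by rw [hΓy, dotProduct_comm, htdef]
    have h2y := hm2 y hyv1
    rw [hyΓy] at h2y
    have hyy : 0 ≤ y ⬝ᵥ y := dot_self_nonneg y
    have ht0 : 0 ≤ t := le_trans (by positivity) h2y
    have hcs : t ^ 2 ≤ (p' ⬝ᵥ p') * (y ⬝ᵥ y) := cs p' y
    have hp'p' : 0 ≤ p' ⬝ᵥ p' := dot_self_nonneg p'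
    -- lam2 * t ≤ p' ⬝ᵥ p'
    have key : lam2 * t ≤ p' ⬝ᵥ p' := by
      rcases eq_or_lt_of_le ht0 with h0 | h0
      · rw [← h0, mul_zero]; exact hp'p'
      · have h3 : (lam2 * t) * t ≤ (p' ⬝ᵥ p') * t := by
          calc (lam2 * t) * t = lam2 * t ^ 2 := by ring
            _ ≤ lam2 * ((p' ⬝ᵥ p') * (y ⬝ᵥ y)) := mul_le_mul_of_nonneg_left hcs hl2.le
            _ = (p' ⬝ᵥ p') * (lam2 * (y ⬝ᵥ y)) := by ring
            _ ≤ (p' ⬝ᵥ p') * t := mul_le_mul_of_nonneg_left h2y hp'p'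
        exact le_of_mul_le_mul_right h3 h0
    -- decomposition of p ⬝ᵥ Γi *ᵥ p
    have e3 : p ⬝ᵥ Γi *ᵥ p = t + a ^ 2 * lam1⁻¹ := by
      have hpexp : p = p' + a • v1 := by rw [hp'def]; abel
      have hΓip : Γi *ᵥ p = y + (a * lam1⁻¹) • v1 := by
        rw [hpexp, mulVec_add, mulVec_smul, hΓiv1, hydef, smul_smul]
      rw [hΓip]
      nth_rewrite 1 [hpexp]
      have hv1y : v1 ⬝ᵥ y = 0 := by rw [dotProduct_comm]; exact hyv1
      simp only [add_dotProduct, dotProduct_add, smul_dotProduct, dotProduct_smul,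
        smul_eq_mul, hv1, hv1y, hp'1, ← htdef]
      ring
    have e4 : p' ⬝ᵥ p' = np - a ^ 2 := by
      simp only [hp'def, sub_dotProduct, dotProduct_sub, smul_dotProduct, dotProduct_smul,
        smul_eq_mul, hv1]
      rw [dotProduct_comm v1 p, ← hadef, ← hnpdef]
      ring
    rw [hpΓi] at e3
    rw [e4] at key
    -- from e3 : t + a^2/lam1 = 1 ; key : lam2 * t ≤ np - a^2
    have e5 : lam1 = lam1 * t + a ^ 2 := by
      field_simp [hl1.ne'] at e3
      linarith [e3]
    have e6 : lam1 * (lam2 * t) ≤ lam1 * (np - a ^ 2) := mul_le_mul_of_nonneg_left key hl1.le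
    have e8 : lam1 * (lam2 * t) = lam2 * lam1 - lam2 * a ^ 2 := by
      have e7 : lam1 * t = lam1 - a ^ 2 := by linarith
      calc lam1 * (lam2 * t) = lam2 * (lam1 * t) := by ring
        _ = lam2 * (lam1 - a ^ 2) := by rw [e7]
        _ = lam2 * lam1 - lam2 * a ^ 2 := by ring
    linarith
  -- D3 : a^2 + b^2 ≤ np
  have D3 : a ^ 2 + b ^ 2 ≤ np := by
    set z := np • v1 - a • p - b • w with hzdef
    have hzz : z ⬝ᵥ z = np * (np - a ^ 2 - b ^ 2) := by
      rw [hzdef]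
      simp only [sub_dotProduct, dotProduct_sub, smul_dotProduct, dotProduct_smul, smul_eq_mul,
        hv1]
      rw [dotProduct_comm v1 p, dotProduct_comm v1 w, dotProduct_comm p w, hww, ← hadef,
        ← hbdef, ← hnpdef, hwp]
      ring
    have := dot_self_nonneg z
    rw [hzz] at this
    nlinarith [hnp]
  nlinarith [D1, D2, D3, hnp, sq_nonneg b, mul_nonneg (sub_nonneg.mpr hl12) (sub_nonneg.mpr D3)]


lemma sqrt_eig {n : Type*} [Fintype n] [DecidableEq n]
    (R Γ : Matrix n n ℝ) (hpsd : ∀ x : n → ℝ, 0 ≤ x ⬝ᵥ R *ᵥ x)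
    (hRR : R * R = Γ) (lam1 : ℝ) (hl : 0 < lam1) (v1 : n → ℝ)
    (hev : Γ *ᵥ v1 = lam1 • v1) : R *ᵥ v1 = Real.sqrt lam1 • v1 := by
  set s := Real.sqrt lam1 with hsdef
  have hs : 0 < s := Real.sqrt_pos.mpr hl
  have hss : s * s = lam1 := Real.mul_self_sqrt hl.le
  set z := R *ᵥ v1 with hzdef
  have hRz : R *ᵥ z = lam1 • v1 := by
    rw [hzdef, mulVec_mulVec, hRR, hev]

  set y := z - s • v1 with hydef
  have hRy : R *ᵥ y = -(s • y) := by
    rw [hydef, mulVec_sub, mulVec_smul, hRz, ← hzdef, smul_sub, smul_smul, hss]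
    abel
  have h0 : 0 ≤ y ⬝ᵥ R *ᵥ y := hpsd y
  rw [hRy, dotProduct_neg, dotProduct_smul, smul_eq_mul] at h0
  have hyy : 0 ≤ y ⬝ᵥ y := dot_self_nonneg y
  have hy0 : y ⬝ᵥ y = 0 := by nlinarith
  have : y = 0 := dotProduct_self_eq_zero.mp hy0
  have hz0 : z - s • v1 = 0 := by rw [← hydef]; exact this
  exact sub_eq_zero.mp hz0


noncomputable section

def σc : Matrix (Fin 2 ⊕ Fin 2) (Fin 2 ⊕ Fin 2) ℝ := Matrix.fromBlocks 0 1 (-1) 0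
def Ec : Matrix (Fin 2) (Fin 2) ℝ := Matrix.diagonal ![1, -1]
def σtc : Matrix (Fin 2 ⊕ Fin 2) (Fin 2 ⊕ Fin 2) ℝ := Matrix.fromBlocks 0 Ec (-Ec) 0
def Fc : Matrix (Fin 2) (Fin 2) ℝ := !![0, 1; -1, 0]
def Qc : Matrix (Fin 2 ⊕ Fin 2) (Fin 2 ⊕ Fin 2) ℝ := Matrix.fromBlocks Fc 0 0 (-Fc)

lemma σc_t : σcᵀ = -σc := by
  unfold σc; rw [fromBlocks_transpose]; ext i j
  rcases i with i|i <;> rcases j with j|j <;> simp [fromBlocks]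

lemma σc_sq : σc * σc = -1 := by
  unfold σc; rw [fromBlocks_multiply]; ext i j
  rcases i with i|i <;> rcases j with j|j <;> simp [fromBlocks, Matrix.one_apply]

lemma σtc_t : σtcᵀ = -σtc := by
  unfold σtc; rw [fromBlocks_transpose]; ext i j
  rcases i with i|i <;> rcases j with j|j <;>
    fin_cases i <;> fin_cases j <;>
    simp [fromBlocks, Ec, Matrix.diagonal, Matrix.transpose_apply]

lemma σtc_sq : σtc * σtc = -1 := by
  unfold σtc; rw [fromBlocks_multiply]; ext i j
  rcases i with i|i <;> rcases j with j|j <;>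
    fin_cases i <;> fin_cases j <;>
    simp [fromBlocks, Ec, Matrix.one_apply, Matrix.mul_apply, Matrix.diagonal, Fin.sum_univ_two]


lemma σtc_eq : (Matrix.fromBlocks 1 0 0 Ec) * σc * (Matrix.fromBlocks 1 0 0 Ec) = σtc := by
  unfold σc σtc
  rw [fromBlocks_multiply, fromBlocks_multiply]
  ext i j
  rcases i with i | i <;> rcases j with j | j <;> fin_cases i <;> fin_cases j <;>
    simp [fromBlocks, Ec, Matrix.mul_apply, Matrix.diagonal, Fin.sum_univ_two]

lemma Qc_t : Qcᵀ = -Qc := by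
  ext i j
  rcases i with i|i <;> rcases j with j|j <;>
    fin_cases i <;> fin_cases j <;>
    simp [Qc, fromBlocks, Fc, Matrix.transpose_apply]

lemma Qc_σc_anticomm : σc * Qc = -(Qc * σc) := by
  unfold Qc σc; rw [fromBlocks_multiply, fromBlocks_multiply]; ext i j
  rcases i with i|i <;> rcases j with j|j <;>
    fin_cases i <;> fin_cases j <;>
    simp [fromBlocks, Fc, Matrix.mul_apply, Fin.sum_univ_two]

lemma σc_mm (x : Fin 2 ⊕ Fin 2 → ℝ) : σc *ᵥ (σc *ᵥ x) = -x := by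
  rw [mulVec_mulVec, σc_sq, neg_mulVec, one_mulVec]

lemma dmv' (A : Matrix (Fin 2 ⊕ Fin 2) (Fin 2 ⊕ Fin 2) ℝ) (x y : Fin 2 ⊕ Fin 2 → ℝ) :
    x ⬝ᵥ A *ᵥ y = (Aᵀ *ᵥ x) ⬝ᵥ y := by
  rw [dotProduct_mulVec, mulVec_transpose]

lemma dJJ (x y : Fin 2 ⊕ Fin 2 → ℝ) : (σc *ᵥ x) ⬝ᵥ (σc *ᵥ y) = x ⬝ᵥ y := by
  rw [dmv' σc (σc *ᵥ x) y, mulVec_mulVec, σc_t, Matrix.neg_mul, σc_sq, neg_neg, one_mulVec]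

lemma dJ_skew (x y : Fin 2 ⊕ Fin 2 → ℝ) : x ⬝ᵥ (σc *ᵥ y) = -((σc *ᵥ x) ⬝ᵥ y) := by
  rw [dmv' σc x y, σc_t, neg_mulVec, neg_dotProduct]

lemma dJ_self (x : Fin 2 ⊕ Fin 2 → ℝ) : x ⬝ᵥ (σc *ᵥ x) = 0 := by
  have h := dJ_skew x x
  have h2 : (σc *ᵥ x) ⬝ᵥ x = x ⬝ᵥ (σc *ᵥ x) := dotProduct_comm _ _
  rw [h2] at h; linarith

lemma dQ_self (x : Fin 2 ⊕ Fin 2 → ℝ) : x ⬝ᵥ (Qc *ᵥ x) = 0 := by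
  have h : x ⬝ᵥ (Qc *ᵥ x) = -((Qc *ᵥ x) ⬝ᵥ x) := by
    rw [dmv' Qc x x, Qc_t, neg_mulVec, neg_dotProduct]
  rw [dotProduct_comm _ x] at h; linarith

lemma dQQ (x y : Fin 2 ⊕ Fin 2 → ℝ) : (Qc *ᵥ x) ⬝ᵥ (Qc *ᵥ y) = x ⬝ᵥ y := by
  have hq : Qcᵀ * Qc = 1 := by
    rw [Qc_t, Matrix.neg_mul]
    have : Qc * Qc = -1 := by
      unfold Qc; rw [fromBlocks_multiply]; ext i j
      rcases i with i|i <;> rcases j with j|j <;>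
        fin_cases i <;> fin_cases j <;>
        simp [fromBlocks, Fc, Matrix.one_apply, Matrix.mul_apply, Fin.sum_univ_two]
    rw [this, neg_neg]
  rw [dmv' Qc (Qc *ᵥ x) y, mulVec_mulVec, hq, one_mulVec]

lemma dσQ_self (x : Fin 2 ⊕ Fin 2 → ℝ) : x ⬝ᵥ (σc *ᵥ (Qc *ᵥ x)) = 0 := by
  have hQσ : Qc * σc = -(σc * Qc) := by rw [Qc_σc_anticomm, neg_neg]
  have hskew : (σc * Qc)ᵀ = -(σc * Qc) := by
    rw [Matrix.transpose_mul, Qc_t, σc_t, Matrix.neg_mul, Matrix.mul_neg, neg_neg, hQσ]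
  have h : x ⬝ᵥ ((σc * Qc) *ᵥ x) = -(((σc * Qc) *ᵥ x) ⬝ᵥ x) := by
    rw [dmv' (σc * Qc) x x, hskew, neg_mulVec, neg_dotProduct]
  rw [dotProduct_comm _ x] at h
  rw [← mulVec_mulVec] at h
  linarith

end

end TwoModeAux

namespace TwoModeAux

noncomputable section

def Kof (col : (Fin 2 ⊕ Fin 2) → (Fin 2 ⊕ Fin 2) → ℝ) :
    Matrix (Fin 2 ⊕ Fin 2) (Fin 2 ⊕ Fin 2) ℝ :=
  Matrix.of fun i j => col j i

lemma Kof_tK (col : (Fin 2 ⊕ Fin 2) → (Fin 2 ⊕ Fin 2) → ℝ) (i j : Fin 2 ⊕ Fin 2) :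
    ((Kof col)ᵀ * Kof col) i j = col i ⬝ᵥ col j := by
  simp [Kof, Matrix.mul_apply, dotProduct, Matrix.transpose_apply]

lemma Kof_tMK (col : (Fin 2 ⊕ Fin 2) → (Fin 2 ⊕ Fin 2) → ℝ)
    (M : Matrix (Fin 2 ⊕ Fin 2) (Fin 2 ⊕ Fin 2) ℝ) (i j : Fin 2 ⊕ Fin 2) :
    ((Kof col)ᵀ * M * Kof col) i j = col i ⬝ᵥ (M *ᵥ col j) := by
  simp only [Matrix.mul_apply, Matrix.transpose_apply, Kof, Matrix.of_apply, mulVec, dotProduct,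
    Finset.sum_mul, Finset.mul_sum]
  rw [Finset.sum_comm]
  apply Finset.sum_congr rfl
  intro k _
  apply Finset.sum_congr rfl
  intro l _
  ring

lemma Kof_mulVec (col : (Fin 2 ⊕ Fin 2) → (Fin 2 ⊕ Fin 2) → ℝ) (m : Fin 2 ⊕ Fin 2 → ℝ) :
    Kof col *ᵥ m = m (Sum.inl 0) • col (Sum.inl 0) + m (Sum.inl 1) • col (Sum.inl 1)
      + m (Sum.inr 0) • col (Sum.inr 0) + m (Sum.inr 1) • col (Sum.inr 1) := by
  funext j
  simp [Kof, mulVec, dotProduct, Fintype.sum_sum_type, Fin.sum_univ_two]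
  ring

lemma Kof_t_mulVec (col : (Fin 2 ⊕ Fin 2) → (Fin 2 ⊕ Fin 2) → ℝ) (x : Fin 2 ⊕ Fin 2 → ℝ) :
    (Kof col)ᵀ *ᵥ x = fun i => col i ⬝ᵥ x := by
  funext i
  simp [Kof, mulVec, dotProduct, Matrix.transpose_apply]

lemma σtc_mulVec (m : Fin 2 ⊕ Fin 2 → ℝ) :
    σtc *ᵥ m = Sum.elim ![m (Sum.inr 0), -(m (Sum.inr 1))] ![-(m (Sum.inl 0)), m (Sum.inl 1)] := by
  funext j
  rcases j with j | j <;> fin_cases j <;>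
    simp [σtc, mulVec, dotProduct, fromBlocks, Ec, Fintype.sum_sum_type, Fin.sum_univ_two,
      Matrix.diagonal]

lemma constructJ (J : Matrix (Fin 2 ⊕ Fin 2) (Fin 2 ⊕ Fin 2) ℝ)
    (hJt : Jᵀ = -J) (hJ2 : J * J = -1)
    (u1 u2 w1 w2 : Fin 2 ⊕ Fin 2 → ℝ)
    (hw1def : w1 = J *ᵥ u1) (hw2def : w2 = J *ᵥ u2)
    (h11 : u1 ⬝ᵥ u1 = 1) (h22 : u2 ⬝ᵥ u2 = 1)
    (h12 : u1 ⬝ᵥ u2 = 0) (h1J2 : u1 ⬝ᵥ w2 = 0) :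
    ∃ K : Matrix (Fin 2 ⊕ Fin 2) (Fin 2 ⊕ Fin 2) ℝ,
      Kᵀ * J * K = Matrix.fromBlocks 0 1 (-1) 0 ∧ Kᵀ * K = 1 ∧
      ∀ x : Fin 2 ⊕ Fin 2 → ℝ, (K * σtc * Kᵀ) *ᵥ x =
        (u1 ⬝ᵥ x) • w1 - (u2 ⬝ᵥ x) • w2 - (w1 ⬝ᵥ x) • u1 + (w2 ⬝ᵥ x) • u2 := by
  have dmvJ : ∀ x y : Fin 2 ⊕ Fin 2 → ℝ, x ⬝ᵥ J *ᵥ y = (Jᵀ *ᵥ x) ⬝ᵥ y := fun x y => by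
    rw [dotProduct_mulVec, mulVec_transpose]
  have dJJ' : ∀ x y : Fin 2 ⊕ Fin 2 → ℝ, (J *ᵥ x) ⬝ᵥ (J *ᵥ y) = x ⬝ᵥ y := fun x y => by
    rw [dmvJ, mulVec_mulVec, hJt, Matrix.neg_mul, hJ2, neg_neg, one_mulVec]
  have dJskew : ∀ x y : Fin 2 ⊕ Fin 2 → ℝ, x ⬝ᵥ (J *ᵥ y) = -((J *ᵥ x) ⬝ᵥ y) := fun x y => by
    rw [dmvJ, hJt, neg_mulVec, neg_dotProduct]
  have dJself : ∀ x : Fin 2 ⊕ Fin 2 → ℝ, x ⬝ᵥ (J *ᵥ x) = 0 := fun x => by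
    have h := dJskew x x
    rw [dotProduct_comm (J *ᵥ x) x] at h
    linarith [h]
  have Jmm : ∀ x : Fin 2 ⊕ Fin 2 → ℝ, J *ᵥ (J *ᵥ x) = -x := fun x => by
    rw [mulVec_mulVec, hJ2, neg_mulVec, one_mulVec]
  have f1 : u2 ⬝ᵥ u1 = 0 := by rw [dotProduct_comm]; exact h12
  have f2 : w1 ⬝ᵥ w1 = 1 := by rw [hw1def, dJJ', h11]
  have f3 : w2 ⬝ᵥ w2 = 1 := by rw [hw2def, dJJ', h22]
  have f4 : w1 ⬝ᵥ w2 = 0 := by rw [hw1def, hw2def, dJJ', h12]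
  have f5 : w2 ⬝ᵥ w1 = 0 := by rw [dotProduct_comm]; exact f4
  have f6 : u1 ⬝ᵥ w1 = 0 := by rw [hw1def, dJself]
  have f7 : w1 ⬝ᵥ u1 = 0 := by rw [dotProduct_comm]; exact f6
  have f8 : u2 ⬝ᵥ w2 = 0 := by rw [hw2def, dJself]
  have f9 : w2 ⬝ᵥ u2 = 0 := by rw [dotProduct_comm]; exact f8
  have f10 : u1 ⬝ᵥ w2 = 0 := h1J2
  have f11 : w2 ⬝ᵥ u1 = 0 := by rw [dotProduct_comm]; exact f10
  have f12 : u2 ⬝ᵥ w1 = 0 := by rw [hw1def, dJskew, ← hw2def, f11, neg_zero]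
  have f13 : w1 ⬝ᵥ u2 = 0 := by rw [dotProduct_comm]; exact f12
  have g1 : J *ᵥ w1 = -u1 := by rw [hw1def, Jmm]
  have g2 : J *ᵥ w2 = -u2 := by rw [hw2def, Jmm]
  have g1' : J *ᵥ u1 = w1 := hw1def.symm
  have g2' : J *ᵥ u2 = w2 := hw2def.symm
  set col : (Fin 2 ⊕ Fin 2) → (Fin 2 ⊕ Fin 2) → ℝ :=
    Sum.elim ![u1, u2] ![-w1, -w2] with hcoldef
  refine ⟨Kof col, ?_, ?_, ?_⟩
  · ext i j
    rw [Kof_tMK]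
    rcases i with i | i <;> rcases j with j | j <;> fin_cases i <;> fin_cases j <;>
      simp [hcoldef, fromBlocks, mulVec_neg, g1, g2, g1', g2', dotProduct_neg,
        neg_dotProduct, h11, h22, h12, f1, f2, f3, f4, f5, f6, f7, f8, f9, f10, f11, f12, f13]
  · ext i j
    rw [Kof_tK]
    rcases i with i | i <;> rcases j with j | j <;> fin_cases i <;> fin_cases j <;>
      simp [hcoldef, Matrix.one_apply, dotProduct_neg, neg_dotProduct, h11, h22, h12, f1,
        f2, f3, f4, f5, f6, f7, f8, f9, f10, f11, f12, f13]
  · intro x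
    rw [← mulVec_mulVec, ← mulVec_mulVec, Kof_t_mulVec, σtc_mulVec, Kof_mulVec]
    simp only [hcoldef, Sum.elim_inl, Sum.elim_inr, Matrix.cons_val_zero, Matrix.cons_val_one,
      Matrix.head_cons, dotProduct_neg, neg_dotProduct, smul_neg, neg_smul, neg_neg]
    module

end


end TwoModeAux
open TwoModeAux

/-- For a two-mode positive definite covariance matrix `Γ` with two
smallest eigenvalues `λ1 ≤ λ2`, `λ1 λ2 < 1`, the smallest symplectic eigenvalue of the
partially transposed covariance matrix, minimized over passive transformations
`Γ ↦ Kᵀ Γ K`, equals `√(λ1 λ2)`; equivalently the maximal attainable logarithmic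
negativity is `−log₂(λ1 λ2)/2`. -/
theorem two_mode_optimal_log_negativity
    (σ : Matrix (Fin 2 ⊕ Fin 2) (Fin 2 ⊕ Fin 2) ℝ)
    (hσ : σ = Matrix.fromBlocks 0 1 (-1) 0)
    (E : Matrix (Fin 2) (Fin 2) ℝ) (hE : E = Matrix.diagonal ![1, -1])
    (σt : Matrix (Fin 2 ⊕ Fin 2) (Fin 2 ⊕ Fin 2) ℝ)
    (hσt : σt = (Matrix.fromBlocks 1 0 0 E) * σ * (Matrix.fromBlocks 1 0 0 E))
    (Γ : Matrix (Fin 2 ⊕ Fin 2) (Fin 2 ⊕ Fin 2) ℝ)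
    (hΓsymm : Γ.IsSymm) (hΓpd : Γ.PosDef)
    (lam1 lam2 : ℝ) (v1 v2 : Fin 2 ⊕ Fin 2 → ℝ)
    (hv1 : v1 ⬝ᵥ v1 = 1) (hv2 : v2 ⬝ᵥ v2 = 1) (hv12 : v1 ⬝ᵥ v2 = 0)
    (hev1 : Γ.mulVec v1 = lam1 • v1) (hev2 : Γ.mulVec v2 = lam2 • v2)
    (hmin1 : ∀ x : Fin 2 ⊕ Fin 2 → ℝ, x ⬝ᵥ x = 1 → lam1 ≤ x ⬝ᵥ Γ.mulVec x)
    (hmin2 : ∀ x : Fin 2 ⊕ Fin 2 → ℝ, x ⬝ᵥ x = 1 → x ⬝ᵥ v1 = 0 → lam2 ≤ x ⬝ᵥ Γ.mulVec x)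
    (hprod : lam1 * lam2 < 1)
    (T : Set ℝ)
    (hT : T = { r : ℝ | ∃ K : Matrix (Fin 2 ⊕ Fin 2) (Fin 2 ⊕ Fin 2) ℝ,
      Kᵀ * σ * K = σ ∧ Kᵀ * K = 1 ∧
      r = Real.sqrt (sInf { q : ℝ | ∃ ξ : Fin 2 ⊕ Fin 2 → ℝ, ξ ⬝ᵥ ξ = 1 ∧
        q = ξ ⬝ᵥ (hΓpd.posSemidef.sqrt * ((K * σt * Kᵀ)ᵀ * Γ * (K * σt * Kᵀ)) *
          hΓpd.posSemidef.sqrt).mulVec ξ }) }) :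
    sInf T = Real.sqrt (lam1 * lam2) ∧
      -Real.logb 2 ((sInf T) ^ 2) / 2 = -Real.logb 2 (lam1 * lam2) / 2 := by
  set R := hΓpd.posSemidef.sqrt with hRdef
  have hRt : Rᵀ = R := hΓpd.posSemidef.posSemidef_sqrt.1
  have hRR : R * R = Γ := hΓpd.posSemidef.sqrt_mul_self
  have hRpsd : ∀ x : Fin 2 ⊕ Fin 2 → ℝ, 0 ≤ x ⬝ᵥ R *ᵥ x := fun x => by
    simpa using hΓpd.posSemidef.posSemidef_sqrt.2 x
  have hΓt : Γᵀ = Γ := hΓsymm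
  have hdet : IsUnit Γ.det := hΓpd.det_pos.ne'.isUnit
  have hv1ne : v1 ≠ 0 := fun h => by simp [h] at hv1
  have hv2ne : v2 ≠ 0 := fun h => by simp [h] at hv2
  have hl1 : 0 < lam1 := by
    have h : 0 < v1 ⬝ᵥ Γ *ᵥ v1 := by have := hΓpd.dotProduct_mulVec_pos hv1ne; simpa using this
    rwa [hev1, dotProduct_smul, smul_eq_mul, hv1, mul_one] at h
  have hl2 : 0 < lam2 := by
    have h : 0 < v2 ⬝ᵥ Γ *ᵥ v2 := by have := hΓpd.dotProduct_mulVec_pos hv2ne; simpa using this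
    rwa [hev2, dotProduct_smul, smul_eq_mul, hv2, mul_one] at h
  have hl12 : lam1 ≤ lam2 := by
    have h := hmin1 v2 hv2
    rwa [hev2, dotProduct_smul, smul_eq_mul, hv2, mul_one] at h
  have hm1' := rayleigh_hom Γ lam1 hmin1
  have hm2' := rayleigh_hom2 Γ lam2 v1 hmin2
  have hRv1 : R *ᵥ v1 = Real.sqrt lam1 • v1 := sqrt_eig R Γ hRpsd hRR lam1 hl1 v1 hev1
  have hσtc : σt = σtc := by rw [hσt, hσ, hE]; exact σtc_eq
  -- pointwise lower bound
  have lower : ∀ K : Matrix (Fin 2 ⊕ Fin 2) (Fin 2 ⊕ Fin 2) ℝ, Kᵀ * σ * K = σ → Kᵀ * K = 1 →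
      ∀ ξ : Fin 2 ⊕ Fin 2 → ℝ, ξ ⬝ᵥ ξ = 1 →
      lam1 * lam2 ≤ ξ ⬝ᵥ (R * ((K * σt * Kᵀ)ᵀ * Γ * (K * σt * Kᵀ)) * R) *ᵥ ξ := by
    intro K hK1 hK2 ξ hξ
    have hKK : K * Kᵀ = 1 := mul_eq_one_comm.mp hK2
    set S := K * σt * Kᵀ with hSdef
    have hSt : Sᵀ = -S := by
      simp only [hSdef, hσtc, Matrix.transpose_mul, Matrix.transpose_transpose, σtc_t,
        Matrix.neg_mul, Matrix.mul_neg, Matrix.mul_assoc]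
    have hSS : Sᵀ * S = 1 := by
      have h1 : S * S = -1 := by
        simp only [hSdef, hσtc, Matrix.mul_assoc]
        rw [← Matrix.mul_assoc Kᵀ K (σtc * Kᵀ), hK2, Matrix.one_mul,
          ← Matrix.mul_assoc σtc σtc Kᵀ, σtc_sq]
        rw [Matrix.neg_mul, Matrix.one_mul, Matrix.mul_neg, hKK]
      rw [hSt, Matrix.neg_mul, h1, neg_neg]
    exact core Γ R S hΓt hRt hRR hdet lam1 lam2 hl1 hl2 hl12 v1 hv1 hev1 hm1' hm2' hSt hSS ξ hξ
  -- attainment: construct a passive K mapping (under K σt Kᵀ) v1 to ± v2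
  have hs2s2 : (σc *ᵥ v2) ⬝ᵥ (σc *ᵥ v2) = 1 := by rw [dJJ, hv2]
  set c := v1 ⬝ᵥ (σc *ᵥ v2) with hcdef
  have hc2 : c ^ 2 ≤ 1 := by
    have h := cs v1 (σc *ᵥ v2)
    rwa [hv1, hs2s2, one_mul] at h
  obtain ⟨K, hKJ, hKo, ε, hε2, hKact⟩ :
      ∃ K : Matrix (Fin 2 ⊕ Fin 2) (Fin 2 ⊕ Fin 2) ℝ, Kᵀ * σ * K = σ ∧ Kᵀ * K = 1 ∧
        ∃ ε : ℝ, ε ^ 2 = 1 ∧ (K * σt * Kᵀ) *ᵥ v1 = ε • v2 := by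
    by_cases hdeg : c ^ 2 = 1
    · -- degenerate case : v2 = ± σ v1
      have hz : σc *ᵥ v2 = c • v1 := by
        have hzz : (σc *ᵥ v2 - c • v1) ⬝ᵥ (σc *ᵥ v2 - c • v1) = 0 := by
          simp only [sub_dotProduct, dotProduct_sub, smul_dotProduct, dotProduct_smul,
            smul_eq_mul, hs2s2, hv1]
          rw [dotProduct_comm (σc *ᵥ v2) v1, ← hcdef]
          nlinarith [hdeg]
        exact sub_eq_zero.mp (dotProduct_self_eq_zero.mp hzz)
      have hσv1 : σc *ᵥ v1 = (-c) • v2 := by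
        have h1 := congrArg (fun z => σc *ᵥ z) hz
        simp only [mulVec_smul] at h1
        rw [σc_mm] at h1
        have h2 := congrArg (fun z => c • z) h1
        simp only [smul_smul, smul_neg] at h2
        have hc1 : c * c = 1 := by nlinarith [hdeg]
        rw [hc1, one_smul] at h2
        rw [← h2, neg_smul]
      obtain ⟨K, hc1, hc2', hact⟩ := constructJ σc σc_t σc_sq v1 (Qc *ᵥ v1) (σc *ᵥ v1)
        (σc *ᵥ (Qc *ᵥ v1)) rfl rfl hv1 (by rw [dQQ, hv1]) (dQ_self v1) (dσQ_self v1)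
      refine ⟨K, by rw [hσ]; exact hc1, hc2', -c, by nlinarith [hdeg], ?_⟩
      rw [hσtc, hact v1]
      have e1 : (Qc *ᵥ v1) ⬝ᵥ v1 = 0 := by rw [dotProduct_comm]; exact dQ_self v1
      have e2 : (σc *ᵥ v1) ⬝ᵥ v1 = 0 := by rw [dotProduct_comm]; exact dJ_self v1
      have e3 : (σc *ᵥ (Qc *ᵥ v1)) ⬝ᵥ v1 = 0 := by rw [dotProduct_comm]; exact dσQ_self v1
      rw [hv1, e1, e2, e3, hσv1]
      simp
    · -- generic case
      have hclt : c ^ 2 < 1 := lt_of_le_of_ne hc2 hdeg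
      have h2m : 0 < 2 - 2 * c := by nlinarith
      have h2p : 0 < 2 + 2 * c := by nlinarith
      set n1 := Real.sqrt (2 - 2 * c) with hn1def
      set n2 := Real.sqrt (2 + 2 * c) with hn2def
      have hn1 : n1 ≠ 0 := (Real.sqrt_pos.mpr h2m).ne'
      have hn2 : n2 ≠ 0 := (Real.sqrt_pos.mpr h2p).ne'
      have hn1sq : n1 * n1 = 2 - 2 * c := Real.mul_self_sqrt h2m.le
      have hn2sq : n2 * n2 = 2 + 2 * c := Real.mul_self_sqrt h2p.le
      set s2 := σc *ᵥ v2 with hs2def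
      set s1 := σc *ᵥ v1 with hs1def
      have hv1s2 : v1 ⬝ᵥ s2 = c := hcdef.symm
      have hs2v1 : s2 ⬝ᵥ v1 = c := (dotProduct_comm _ _).trans hv1s2
      have hv1s1 : v1 ⬝ᵥ s1 = 0 := by rw [hs1def]; exact dJ_self v1
      have hs1v1 : s1 ⬝ᵥ v1 = 0 := by rw [dotProduct_comm]; exact hv1s1
      have hs1s2 : s1 ⬝ᵥ s2 = 0 := by rw [hs1def, hs2def, dJJ]; exact hv12
      have hs2s1 : s2 ⬝ᵥ s1 = 0 := by rw [dotProduct_comm]; exact hs1s2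
      have hv2s2 : v2 ⬝ᵥ s2 = 0 := by rw [hs2def]; exact dJ_self v2
      have hs2v2 : s2 ⬝ᵥ v2 = 0 := by rw [dotProduct_comm]; exact hv2s2
      have hs1v2 : s1 ⬝ᵥ v2 = -c := by
        have h := dJ_skew v1 v2
        rw [← hs2def] at h
        rw [hv1s2] at h
        rw [hs1def]
        linarith [h]
      have hv2s1 : v2 ⬝ᵥ s1 = -c := by rw [dotProduct_comm]; exact hs1v2
      have hv2v1 : v2 ⬝ᵥ v1 = 0 := by rw [dotProduct_comm]; exact hv12
      set u1 := n1⁻¹ • (v1 - s2) with hu1def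
      set u2 := n2⁻¹ • (v1 + s2) with hu2def
      have hw1 : σc *ᵥ u1 = n1⁻¹ • (s1 + v2) := by
        rw [hu1def, mulVec_smul, mulVec_sub, ← hs1def, hs2def, σc_mm, sub_neg_eq_add]
      have hw2 : σc *ᵥ u2 = n2⁻¹ • (s1 - v2) := by
        rw [hu2def, mulVec_smul, mulVec_add, ← hs1def, hs2def, σc_mm, ← sub_eq_add_neg]
      have h11 : u1 ⬝ᵥ u1 = 1 := by
        rw [hu1def]
        simp only [smul_dotProduct, dotProduct_smul, sub_dotProduct, dotProduct_sub,
          smul_eq_mul, hv1, hv1s2, hs2v1, hs2s2]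
        rw [show n1⁻¹ * (n1⁻¹ * (1 - c) - n1⁻¹ * (c - 1)) = (n1 * n1)⁻¹ * (2 - 2 * c) from by
          rw [mul_inv]; ring, hn1sq, inv_mul_cancel₀ h2m.ne']
      have h22 : u2 ⬝ᵥ u2 = 1 := by
        rw [hu2def]
        simp only [smul_dotProduct, dotProduct_smul, add_dotProduct, dotProduct_add,
          smul_eq_mul, hv1, hv1s2, hs2v1, hs2s2]
        rw [show n2⁻¹ * (n2⁻¹ * (1 + c) + n2⁻¹ * (c + 1)) = (n2 * n2)⁻¹ * (2 + 2 * c) from by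
          rw [mul_inv]; ring, hn2sq, inv_mul_cancel₀ h2p.ne']
      have h12 : u1 ⬝ᵥ u2 = 0 := by
        rw [hu1def, hu2def]
        simp only [smul_dotProduct, dotProduct_smul, sub_dotProduct, dotProduct_sub,
          add_dotProduct, dotProduct_add, smul_eq_mul, hv1, hv1s2, hs2v1, hs2s2]
        ring
      have h1J2 : u1 ⬝ᵥ (σc *ᵥ u2) = 0 := by
        rw [hw2, hu1def]
        simp only [smul_dotProduct, dotProduct_smul, sub_dotProduct, dotProduct_sub,
          smul_eq_mul, hv1s1, hv1s2, hs2s1, hs2v2]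
        rw [hv12]
        ring
      obtain ⟨K, hc1, hc2', hact⟩ := constructJ σc σc_t σc_sq u1 u2 (σc *ᵥ u1) (σc *ᵥ u2)
        rfl rfl h11 h22 h12 h1J2
      refine ⟨K, by rw [hσ]; exact hc1, hc2', 1, one_pow 2, ?_⟩
      rw [hσtc, hact v1, hw1, hw2]
      have k1 : u1 ⬝ᵥ v1 = n1⁻¹ * (1 - c) := by
        rw [hu1def]
        simp only [smul_dotProduct, sub_dotProduct, smul_eq_mul, hv1, hs2v1]
      have k2 : u2 ⬝ᵥ v1 = n2⁻¹ * (1 + c) := by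
        rw [hu2def]
        simp only [smul_dotProduct, add_dotProduct, smul_eq_mul, hv1, hs2v1]
      have k3 : (n1⁻¹ • (s1 + v2)) ⬝ᵥ v1 = 0 := by
        simp only [smul_dotProduct, add_dotProduct, smul_eq_mul, hs1v1, hv2v1]
        ring
      have k4 : (n2⁻¹ • (s1 - v2)) ⬝ᵥ v1 = 0 := by
        simp only [smul_dotProduct, sub_dotProduct, smul_eq_mul, hs1v1, hv2v1]
        ring
      rw [k1, k2, k3, k4]
      have q1 : (n1⁻¹ * (1 - c)) • (n1⁻¹ • (s1 + v2)) = (2:ℝ)⁻¹ • (s1 + v2) := by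
        rw [smul_smul]
        congr 1
        rw [show n1⁻¹ * (1 - c) * n1⁻¹ = (1 - c) * (n1 * n1)⁻¹ by
          rw [mul_inv]; ring]
        rw [hn1sq]
        field_simp
        exact div_self (by linarith)
      have q2 : (n2⁻¹ * (1 + c)) • (n2⁻¹ • (s1 - v2)) = (2:ℝ)⁻¹ • (s1 - v2) := by
        rw [smul_smul]
        congr 1
        rw [show n2⁻¹ * (1 + c) * n2⁻¹ = (1 + c) * (n2 * n2)⁻¹ by
          rw [mul_inv]; ring]
        rw [hn2sq]
        field_simp
        exact div_self (by linarith)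
      rw [q1, q2]
      simp only [zero_smul, sub_zero, add_zero]
      module
  -- the attained value is exactly lam1 * lam2
  have hval : v1 ⬝ᵥ (R * ((K * σt * Kᵀ)ᵀ * Γ * (K * σt * Kᵀ)) * R) *ᵥ v1 = lam1 * lam2 := by
    set S := K * σt * Kᵀ with hSdef
    have h1 : v1 ⬝ᵥ (R * (Sᵀ * Γ * S) * R) *ᵥ v1
        = (S *ᵥ (R *ᵥ v1)) ⬝ᵥ (Γ *ᵥ (S *ᵥ (R *ᵥ v1))) := by
      rw [← mulVec_mulVec, ← mulVec_mulVec, ← mulVec_mulVec, ← mulVec_mulVec]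
      rw [dmv R v1 _, hRt]
      rw [dmv Sᵀ (R *ᵥ v1) _, transpose_transpose]
    rw [h1, hRv1, mulVec_smul, hKact, mulVec_smul, mulVec_smul, hev2]
    simp only [dotProduct_smul, smul_dotProduct, smul_eq_mul, hv2]
    have hεsq : ε * ε = 1 := by nlinarith [hε2]
    have hssq : Real.sqrt lam1 * Real.sqrt lam1 = lam1 := Real.mul_self_sqrt hl1.le
    linear_combination (lam2 * ε * ε) * hssq + (lam2 * lam1) * hεsq
  -- assemble the infimum
  have hlb : ∀ r ∈ T, Real.sqrt (lam1 * lam2) ≤ r := by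
    intro r hr
    rw [hT] at hr
    obtain ⟨K', hK1, hK2, rfl⟩ := hr
    apply Real.sqrt_le_sqrt
    apply le_csInf
    · exact ⟨_, v1, hv1, rfl⟩
    · rintro b ⟨ξ, hξ, rfl⟩
      exact lower K' hK1 hK2 ξ hξ
  have hmem : Real.sqrt (lam1 * lam2) ∈ T := by
    rw [hT]
    refine ⟨K, hKJ, hKo, ?_⟩
    have hQ : sInf { q : ℝ | ∃ ξ : Fin 2 ⊕ Fin 2 → ℝ, ξ ⬝ᵥ ξ = 1 ∧
        q = ξ ⬝ᵥ (R * ((K * σt * Kᵀ)ᵀ * Γ * (K * σt * Kᵀ)) * R).mulVec ξ } = lam1 * lam2 := by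
      apply le_antisymm
      · exact csInf_le ⟨lam1 * lam2, by rintro b ⟨ξ, hξ, rfl⟩; exact lower K hKJ hKo ξ hξ⟩
          ⟨v1, hv1, hval.symm⟩
      · apply le_csInf
        · exact ⟨_, v1, hv1, rfl⟩
        · rintro b ⟨ξ, hξ, rfl⟩
          exact lower K hKJ hKo ξ hξ
    rw [hQ]
  have key : sInf T = Real.sqrt (lam1 * lam2) :=
    le_antisymm (csInf_le ⟨Real.sqrt (lam1 * lam2), hlb⟩ hmem) (le_csInf ⟨_, hmem⟩ hlb)
  refine ⟨key, ?_⟩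
  rw [key, Real.sq_sqrt (by positivity : (0:ℝ) ≤ lam1 * lam2)]
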